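/- The relation ≃ of equivalence of forcings is transitive: if P ≃ Q and Q ≃ R, then P ≃ R. -/
import Mathlib


universe u v

/-- A subset `D` of a forcing (preorder) is dense if every condition has an extension in `D`. -/
def DenseSub {P : Type u} [Preorder P] (D : Set P) : Prop :=
  ∀ p : P, ∃ d ∈ D, d ≤ p

/-- A sub-isomorphism `ι : P → Q` is an order isomorphism of `P` onto a dense subset of `Q`:
it is injective, satisfies `p ≤ p' ↔ ι p ≤ ι p'`, and its range is dense in `Q`. -/
structure IsSubIso {P : Type u} {Q : Type v} [Preorder P] [Preorder Q] (ι : P → Q) : Prop where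
  inj : Function.Injective ι
  le_iff : ∀ p p' : P, p ≤ p' ↔ ι p ≤ ι p'
  dense : DenseSub (Set.range ι)

/-- `P` and `Q` are sub-equivalent if there are a forcing `R` and sub-isomorphisms
`R → P` and `R → Q`. -/
def SubEquiv (P Q : Type u) [Preorder P] [Preorder Q] : Prop :=
  ∃ (R : Type u) (instR : Preorder R) (f : R → P) (g : R → Q),
    @IsSubIso R P instR _ f ∧ @IsSubIso R Q instR _ g

/-- `P` and `Q` are equivalent if there are a forcing `S` and sub-isomorphisms
`P → S` and `Q → S`. -/
def EquivForcing (P Q : Type u) [Preorder P] [Preorder Q] : Prop :=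
  ∃ (S : Type u) (instS : Preorder S) (f : P → S) (g : Q → S),
    @IsSubIso P S _ instS f ∧ @IsSubIso Q S _ instS g

/-- Composition of sub-isomorphisms is a sub-isomorphism. -/
theorem IsSubIso.comp {A B C : Type u} [Preorder A] [Preorder B] [Preorder C]
    {f : A → B} {g : B → C} (hf : IsSubIso f) (hg : IsSubIso g) :
    IsSubIso (g ∘ f) := by
  refine ⟨hg.inj.comp hf.inj, fun p p' => (hf.le_iff p p').trans (hg.le_iff _ _), ?_⟩
  intro c
  obtain ⟨_, ⟨b, rfl⟩, hb⟩ := hg.dense c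
  obtain ⟨_, ⟨a, rfl⟩, ha⟩ := hf.dense b
  exact ⟨g (f a), ⟨a, rfl⟩, le_trans ((hg.le_iff _ _).1 ha) hb⟩

/-- The amalgamated order on `S ⊕ T` over `Q`, given maps `u : Q → S`, `v : Q → T`. -/
def amalgLE {Q S T : Type u} [Preorder S] [Preorder T] (u : Q → S) (v : Q → T) :
    S ⊕ T → S ⊕ T → Prop
  | .inl s, .inl s' => s ≤ s'
  | .inl s, .inr t  => ∃ q, s ≤ u q ∧ v q ≤ t
  | .inr t, .inl s  => ∃ q, t ≤ v q ∧ u q ≤ s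
  | .inr t, .inr t' => t ≤ t'

/-- The amalgamated preorder on `S ⊕ T`. -/
def amalgPre {Q S T : Type u} [Preorder Q] [Preorder S] [Preorder T]
    {u : Q → S} {v : Q → T} (hu : IsSubIso u) (hv : IsSubIso v) : Preorder (S ⊕ T) where
  le := amalgLE u v
  lt a b := amalgLE u v a b ∧ ¬ amalgLE u v b a
  lt_iff_le_not_ge _ _ := Iff.rfl
  le_refl := by rintro (s | t) <;> simp [amalgLE]
  le_trans := by
    have qle : ∀ {q q' : Q}, v q ≤ v q' → u q ≤ u q' := fun h =>
      (hu.le_iff _ _).1 ((hv.le_iff _ _).2 h)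
    have qle' : ∀ {q q' : Q}, u q ≤ u q' → v q ≤ v q' := fun h =>
      (hv.le_iff _ _).1 ((hu.le_iff _ _).2 h)
    rintro (a | a) (b | b) (c | c) hab hbc <;> simp only [amalgLE] at *
    · exact le_trans hab hbc
    · obtain ⟨q, h1, h2⟩ := hbc; exact ⟨q, le_trans hab h1, h2⟩
    · obtain ⟨q, h1, h2⟩ := hab
      obtain ⟨q', h1', h2'⟩ := hbc
      exact le_trans h1 (le_trans (qle (le_trans h2 h1')) h2')
    · obtain ⟨q, h1, h2⟩ := hab; exact ⟨q, h1, le_trans h2 hbc⟩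
    · obtain ⟨q, h1, h2⟩ := hab; exact ⟨q, h1, le_trans h2 hbc⟩
    · obtain ⟨q, h1, h2⟩ := hab
      obtain ⟨q', h1', h2'⟩ := hbc
      exact le_trans h1 (le_trans (qle' (le_trans h2 h1')) h2')
    · obtain ⟨q, h1, h2⟩ := hbc; exact ⟨q, le_trans hab h1, h2⟩
    · exact le_trans hab hbc

theorem amalg_inl {Q S T : Type u} [Preorder Q] [Preorder S] [Preorder T]
    {u : Q → S} {v : Q → T} (hu : IsSubIso u) (hv : IsSubIso v) :
    @IsSubIso S (S ⊕ T) _ (amalgPre hu hv) Sum.inl := by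
  refine @IsSubIso.mk S (S ⊕ T) _ (amalgPre hu hv) Sum.inl
    (fun a b h => by injection h) (fun p p' => Iff.rfl) ?_
  rintro (s | t)
  · exact ⟨Sum.inl s, ⟨s, rfl⟩, le_refl s⟩
  · obtain ⟨_, ⟨q, rfl⟩, hq⟩ := hv.dense t
    exact ⟨Sum.inl (u q), ⟨u q, rfl⟩, ⟨q, le_refl _, hq⟩⟩

theorem amalg_inr {Q S T : Type u} [Preorder Q] [Preorder S] [Preorder T]
    {u : Q → S} {v : Q → T} (hu : IsSubIso u) (hv : IsSubIso v) :
    @IsSubIso T (S ⊕ T) _ (amalgPre hu hv) Sum.inr := by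
  refine @IsSubIso.mk T (S ⊕ T) _ (amalgPre hu hv) Sum.inr
    (fun a b h => by injection h) (fun p p' => Iff.rfl) ?_
  rintro (s | t)
  · obtain ⟨_, ⟨q, rfl⟩, hq⟩ := hu.dense s
    exact ⟨Sum.inr (v q), ⟨v q, rfl⟩, ⟨q, le_refl _, hq⟩⟩
  · exact ⟨Sum.inr t, ⟨t, rfl⟩, le_refl t⟩

/-- The relation of equivalence of forcings is transitive. -/
theorem statement2 {P Q R : Type u} [Preorder P] [Preorder Q] [Preorder R]
    (h1 : EquivForcing P Q) (h2 : EquivForcing Q R) : EquivForcing P R := by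
  obtain ⟨S, instS, f, g, hf, hg⟩ := h1
  obtain ⟨T, instT, g', k, hg', hk⟩ := h2
  exact ⟨S ⊕ T, amalgPre hg hg', Sum.inl ∘ f, Sum.inr ∘ k,
    @IsSubIso.comp P S (S ⊕ T) _ _ (amalgPre hg hg') f Sum.inl hf (amalg_inl hg hg'),
    @IsSubIso.comp R T (S ⊕ T) _ _ (amalgPre hg hg') k Sum.inr hk (amalg_inr hg hg')⟩
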